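/- Randomized trio error identity (Theorem 2): Under the randomized setting, for every f ∈ F the identity μ − (∫ f dν̂_ω) = CNF_R(f, ν−ν̂)(ω) · DSC_R(ν−ν̂) · VAR_D(f) holds for P-almost every ω, and moreover E_ω[ |CNF_R(f, ν−ν̂)(ω)|² ] ≤ 1. -/

import Mathlib

open MeasureTheory

/-- **Randomized trio error identity (Theorem 2).**
The sampling measure `ν̂_ω = ∑ i, w i ω • δ_{x i ω}` is random (drawn from a probability
space `(Ω, P)`); `sample g ω = ∫ g dν̂_ω`, `errFn g ω = μ(g) − sample g ω`.
The randomized discrepancy `DSC` is the supremum over nonzero `g ∈ F` of the root mean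
squared error divided by `‖g‖` (assumed finite, via `hbdd`), `VAR` is the deterministic
variation and `CNF ω` the randomized confounding.  Then almost surely
`errFn f ω = CNF ω * DSC * VAR`, and `E[|CNF|²] ≤ 1`. -/
theorem randomized_trio_identity
    {X : Type*} [MeasurableSpace X] (ν : Measure X) [IsProbabilityMeasure ν]
    {Ω : Type*} [MeasurableSpace Ω] (P : Measure Ω) [IsProbabilityMeasure P]
    {F : Type*} [NormedAddCommGroup F] [NormedSpace ℝ F]
    (ι : F →ₗ[ℝ] (X → ℝ))
    (hmeas : ∀ f : F, Measurable (ι f))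
    (hint : ∀ f : F, Integrable (ι f) ν)
    (one : F) (hone : ι one = fun _ => (1 : ℝ))
    (T : F →L[ℝ] ℝ)
    (n : ℕ) (w : Ω → Fin n → ℝ) (x : Ω → Fin n → X)
    (sample : F → Ω → ℝ)
    (hsample : ∀ g : F, ∀ ω : Ω, sample g ω = ∑ i, w ω i * ι g (x ω i))
    (hsmeas : ∀ g : F, Measurable (sample g))
    (hsint : ∀ g : F, Integrable (fun ω => (sample g ω) ^ 2) P)
    (errFn : F → Ω → ℝ)
    (herr : ∀ g : F, ∀ ω : Ω, errFn g ω = (∫ t, ι g t ∂ν) - sample g ω)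
    (hT : (∀ g : F, T g = 0) ∨ (∀ᵐ ω ∂P, (∑ i, w ω i) = 1))
    (hbdd : BddAbove
      {r : ℝ | ∃ g : F, g ≠ 0 ∧ r = Real.sqrt (∫ ω, (errFn g ω) ^ 2 ∂P) / ‖g‖})
    (DSC : ℝ)
    (hDSC : DSC = sSup
      {r : ℝ | ∃ g : F, g ≠ 0 ∧ r = Real.sqrt (∫ ω, (errFn g ω) ^ 2 ∂P) / ‖g‖})
    (f : F)
    (VAR : ℝ) (hVAR : VAR = ‖f - T f • one‖)
    (CNF : Ω → ℝ)
    (hCNF : ∀ ω : Ω, CNF ω =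
      if VAR * DSC ≠ 0 then errFn f ω / (VAR * DSC) else 0) :
    (∀ᵐ ω ∂P, errFn f ω = CNF ω * DSC * VAR) ∧ (∫ ω, |CNF ω| ^ 2 ∂P) ≤ 1 := by
  classical
  set g : F := f - T f • one with hg
  have hgf : f = g + T f • one := by simp [hg]
  have hι : ∀ t, ι f t = ι g t + T f * ι one t := by
    intro t
    conv_lhs => rw [hgf]
    simp [map_add, LinearMap.map_smul]
  have hsample_f : ∀ ω, sample f ω = sample g ω + T f * sample one ω := by
    intro ω
    simp only [hsample, hι, mul_add, Finset.sum_add_distrib, Finset.mul_sum]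
    congr 1
    apply Finset.sum_congr rfl
    intro i _
    ring
  have hint_f : (∫ t, ι f t ∂ν) = (∫ t, ι g t ∂ν) + T f * ∫ t, ι one t ∂ν := by
    simp only [hι]
    rw [integral_add (hint g) ((hint one).const_mul _), integral_const_mul]
  have herr_f : ∀ ω, errFn f ω = errFn g ω + T f * errFn one ω := by
    intro ω
    rw [herr, herr, herr, hint_f, hsample_f]
    ring
  have hT0 : ∀ᵐ ω ∂P, T f * errFn one ω = 0 := by
    rcases hT with h | h
    · filter_upwards with ω
      simp [h f]
    · filter_upwards [h] with ω hω
      rw [herr]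
      simp [hsample, hone, hω]
  have haeq : ∀ᵐ ω ∂P, errFn f ω = errFn g ω := by
    filter_upwards [hT0] with ω hω
    rw [herr_f ω, hω, add_zero]
  have hIntSq : ∀ h : F, Integrable (fun ω => (errFn h ω) ^ 2) P := by
    intro h
    have hs : Integrable (sample h) P := by
      have hb : Integrable (fun ω => (1 + (sample h ω) ^ 2) / 2) P :=
        ((integrable_const 1).add (hsint h)).div_const 2
      refine hb.mono (hsmeas h).aestronglyMeasurable ?_
      filter_upwards with ω
      simp only [Real.norm_eq_abs]
      have habs : |(1 + (sample h ω) ^ 2) / 2| = (1 + (sample h ω) ^ 2) / 2 :=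
        abs_of_nonneg (by positivity)
      rw [habs]
      nlinarith [sq_abs (sample h ω), abs_nonneg (sample h ω),
        sq_nonneg (|sample h ω| - 1)]
    have hfun : (fun ω => (errFn h ω) ^ 2) =
        fun ω => ((∫ t, ι h t ∂ν) ^ 2 - 2 * (∫ t, ι h t ∂ν) * sample h ω)
          + (sample h ω) ^ 2 := by
      funext ω
      rw [herr]
      ring
    rw [hfun]
    exact ((integrable_const _).sub (hs.const_mul _)).add (hsint h)
  have hle : ∀ h : F, h ≠ 0 →
      Real.sqrt (∫ ω, (errFn h ω) ^ 2 ∂P) ≤ DSC * ‖h‖ := by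
    intro h hh
    have hmem : Real.sqrt (∫ ω, (errFn h ω) ^ 2 ∂P) / ‖h‖ ∈
        {r : ℝ | ∃ g : F, g ≠ 0 ∧ r = Real.sqrt (∫ ω, (errFn g ω) ^ 2 ∂P) / ‖g‖} :=
      ⟨h, hh, rfl⟩
    have hds := le_csSup hbdd hmem
    rw [← hDSC] at hds
    have hn : (0:ℝ) < ‖h‖ := norm_pos_iff.mpr hh
    have : Real.sqrt (∫ ω, (errFn h ω) ^ 2 ∂P) / ‖h‖ * ‖h‖ ≤ DSC * ‖h‖ :=
      mul_le_mul_of_nonneg_right hds hn.le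
    rwa [div_mul_cancel₀ _ hn.ne'] at this
  have hg0 : VAR * DSC = 0 → ∀ᵐ ω ∂P, errFn f ω = 0 := by
    intro hvd
    have hg0' : ∀ᵐ ω ∂P, errFn g ω = 0 := by
      by_cases hg' : g = 0
      · filter_upwards with ω
        rw [hg', herr]
        simp [hsample, map_zero]
      · have hV : VAR ≠ 0 := by
          intro h
          apply hg'
          rw [hVAR] at h
          exact norm_eq_zero.mp h
        have hD : DSC = 0 := by
          rcases mul_eq_zero.mp hvd with h | h
          · exact absurd h hV
          · exact h
        have h1 := hle g hg'
        rw [hD, zero_mul] at h1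
        have h2 : (0:ℝ) ≤ ∫ ω, (errFn g ω) ^ 2 ∂P :=
          integral_nonneg fun ω => sq_nonneg _
        have hs0 : Real.sqrt (∫ ω, (errFn g ω) ^ 2 ∂P) = 0 :=
          le_antisymm h1 (Real.sqrt_nonneg _)
        have h3 : (∫ ω, (errFn g ω) ^ 2 ∂P) = 0 := by
          nlinarith [Real.sq_sqrt h2]
        have h4 := (integral_eq_zero_iff_of_nonneg
          (fun ω => sq_nonneg (errFn g ω)) (hIntSq g)).mp h3
        filter_upwards [h4] with ω hω
        have : (errFn g ω) ^ 2 = 0 := hω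
        exact (pow_eq_zero_iff two_ne_zero).mp this
    filter_upwards [haeq, hg0'] with ω h1 h2
    rw [h1, h2]
  constructor
  · by_cases hvd : VAR * DSC = 0
    · filter_upwards [hg0 hvd] with ω hω
      rw [hCNF, hω]
      simp [hvd]
    · filter_upwards with ω
      rw [hCNF]
      simp only [hvd, if_pos, ne_eq, not_false_iff, if_true]
      field_simp
      obtain ⟨hV1, hD1⟩ := mul_ne_zero_iff.mp hvd
      field_simp
  · by_cases hvd : VAR * DSC = 0
    · have : ∀ ω, CNF ω = 0 := by
        intro ω
        rw [hCNF]
        simp [hvd]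
      simp [this]
    · have hV : VAR ≠ 0 := fun h => hvd (by rw [h, zero_mul])
      have hg' : g ≠ 0 := by
        intro h
        apply hV
        rw [hVAR, h, norm_zero]
      have hcalc : (∫ ω, |CNF ω| ^ 2 ∂P) =
          (∫ ω, (errFn f ω) ^ 2 ∂P) / (VAR * DSC) ^ 2 := by
        simp only [hCNF, if_pos hvd, sq_abs, div_pow]
        exact integral_div _ _
      have heq2 : (∫ ω, (errFn f ω) ^ 2 ∂P) = ∫ ω, (errFn g ω) ^ 2 ∂P :=
        integral_congr_ae (haeq.mono fun ω h => by dsimp only; rw [h])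
      have h1 := hle g hg'
      have h2 : (0:ℝ) ≤ ∫ ω, (errFn g ω) ^ 2 ∂P :=
        integral_nonneg fun ω => sq_nonneg _
      have hDnn : 0 ≤ DSC := by
        have hds := le_csSup hbdd ⟨g, hg', rfl⟩
        rw [← hDSC] at hds
        exact le_trans (div_nonneg (Real.sqrt_nonneg _) (norm_nonneg _)) hds
      have h3 : (∫ ω, (errFn g ω) ^ 2 ∂P) ≤ (DSC * ‖g‖) ^ 2 := by
        nlinarith [Real.sq_sqrt h2, Real.sqrt_nonneg (∫ ω, (errFn g ω) ^ 2 ∂P)]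
      rw [hcalc, heq2]
      rw [div_le_one (by positivity)]
      calc (∫ ω, (errFn g ω) ^ 2 ∂P) ≤ (DSC * ‖g‖) ^ 2 := h3
        _ = (VAR * DSC) ^ 2 := by rw [hVAR]; ring
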